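/- For complex q with |q| < 1, the limit as N → ∞ of Σ_{k=0}^{N} q^k · [N choose k]_{q³} · (-q²; q³)_{N-k} equals 1 / ((q²; q³)_∞ · (q; q⁶)_∞). -/

import Mathlib

open Finset Filter

/-- The finite q-Pochhammer symbol `(a; Q)_n = ∏_{i=0}^{n-1} (1 - a Q^i)`. -/
noncomputable def qPoch (a Q : ℂ) (n : ℕ) : ℂ :=
  ∏ i ∈ range n, (1 - a * Q ^ i)

lemma norm_aQ_lt {a Q : ℂ} (ha : ‖a‖ < 1) (hQ : ‖Q‖ < 1) (i : ℕ) : ‖a * Q ^ i‖ < 1 := by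
  rw [norm_mul, norm_pow]
  calc ‖a‖ * ‖Q‖ ^ i ≤ ‖a‖ * 1 := by
        gcongr
        exact pow_le_one₀ (norm_nonneg _) hQ.le
    _ < 1 := by simpa using ha

lemma factor_ne_zero {a Q : ℂ} (ha : ‖a‖ < 1) (hQ : ‖Q‖ < 1) (i : ℕ) : 1 - a * Q ^ i ≠ 0 := by
  intro h
  have h1 : a * Q ^ i = 1 := by linear_combination -h
  have h2 := norm_aQ_lt ha hQ i
  rw [h1, norm_one] at h2
  exact lt_irrefl _ h2

lemma summable_clog {a Q : ℂ} (ha : ‖a‖ < 1) (hQ : ‖Q‖ < 1) :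
    Summable (fun i => Complex.log (1 - a * Q ^ i)) := by
  apply Summable.of_norm_bounded_eventually_nat (g := fun i => 3/2 * (‖a‖ * ‖Q‖ ^ i))
  · exact (((summable_geometric_of_lt_one (norm_nonneg Q) hQ).mul_left ‖a‖).mul_left (3/2))
  · have h0 : Filter.Tendsto (fun i : ℕ => ‖a‖ * ‖Q‖ ^ i) atTop (nhds 0) := by
      simpa using (tendsto_pow_atTop_nhds_zero_of_lt_one (norm_nonneg Q) hQ).const_mul ‖a‖
    filter_upwards [h0.eventually_le_const (by norm_num : (0:ℝ) < 1/2)] with i hi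
    have h1 : ‖-(a * Q ^ i)‖ ≤ 1/2 := by
      rw [norm_neg, norm_mul, norm_pow]; exact hi
    have := Complex.norm_log_one_add_half_le_self h1
    rw [norm_neg, norm_mul, norm_pow] at this
    simpa [sub_eq_add_neg] using this

lemma hasProd_poch {a Q : ℂ} (ha : ‖a‖ < 1) (hQ : ‖Q‖ < 1) :
    HasProd (fun i => 1 - a * Q ^ i) (∏' i, (1 - a * Q ^ i)) :=
  (Complex.hasProd_of_hasSum_log (fun i => factor_ne_zero ha hQ i)
    (summable_clog ha hQ).hasSum).multipliable.hasProd

lemma tprod_poch_ne_zero {a Q : ℂ} (ha : ‖a‖ < 1) (hQ : ‖Q‖ < 1) :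
    (∏' i, (1 - a * Q ^ i)) ≠ 0 := by
  have h := Complex.cexp_tsum_eq_tprod (f := fun i => 1 - a * Q ^ i)
    (fun i => factor_ne_zero ha hQ i) (summable_clog ha hQ)
  rw [← h]
  exact Complex.exp_ne_zero _

lemma tendsto_qPoch {a Q : ℂ} (ha : ‖a‖ < 1) (hQ : ‖Q‖ < 1) :
    Tendsto (fun n => qPoch a Q n) atTop (nhds (∏' i, (1 - a * Q ^ i))) :=
  (hasProd_poch ha hQ).tendsto_prod_nat

/-- real lower bound constant -/
noncomputable def pochLB (r s : ℝ) : ℝ := Real.exp (∑' i : ℕ, Real.log (1 - r * s ^ i))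

lemma pochLB_pos (r s : ℝ) : 0 < pochLB r s := Real.exp_pos _

lemma rfac_mem {r s : ℝ} (hr0 : 0 ≤ r) (hr : r < 1) (hs0 : 0 ≤ s) (hs : s < 1) (i : ℕ) :
    0 ≤ r * s ^ i ∧ r * s ^ i < 1 := by
  constructor
  · positivity
  · calc r * s ^ i ≤ r * 1 := by gcongr; exact pow_le_one₀ hs0 hs.le
      _ < 1 := by simpa using hr

lemma summable_rlog {r s : ℝ} (hr0 : 0 ≤ r) (hr : r < 1) (hs0 : 0 ≤ s) (hs : s < 1) :
    Summable (fun i : ℕ => Real.log (1 - r * s ^ i)) := by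
  apply Summable.of_norm_bounded (g := fun i => (1 - r)⁻¹ * (r * s ^ i))
  · exact ((summable_geometric_of_lt_one hs0 hs).mul_left r).mul_left _
  · intro i
    obtain ⟨h0, h1⟩ := rfac_mem hr0 hr hs0 hs i
    have hpos : (0:ℝ) < 1 - r * s ^ i := by linarith
    have hle : Real.log (1 - r * s ^ i) ≤ 0 :=
      Real.log_nonpos (by linarith) (by linarith)
    rw [Real.norm_eq_abs, abs_of_nonpos hle]
    have := Real.log_le_sub_one_of_pos (x := (1 - r * s ^ i)⁻¹) (by positivity)
    rw [Real.log_inv] at this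
    have h2 : -Real.log (1 - r * s ^ i) ≤ (1 - r * s ^ i)⁻¹ - 1 := this
    have h3 : (1 - r * s ^ i)⁻¹ - 1 = (r * s ^ i) / (1 - r * s ^ i) := by
      field_simp
      ring
    have h4 : (r * s ^ i) / (1 - r * s ^ i) ≤ (r * s ^ i) / (1 - r) := by
      apply div_le_div_of_nonneg_left h0 (by linarith)
      have : r * s ^ i ≤ r := by
        calc r * s ^ i ≤ r * 1 := by gcongr; exact pow_le_one₀ hs0 hs.le
          _ = r := mul_one r
      linarith
    have h5 : (r * s ^ i) / (1 - r) = (1 - r)⁻¹ * (r * s ^ i) := by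
      rw [div_eq_inv_mul]
    linarith

lemma pochLB_le_qPoch {a Q : ℂ} (ha : ‖a‖ < 1) (hQ : ‖Q‖ < 1) (n : ℕ) :
    pochLB ‖a‖ ‖Q‖ ≤ ‖qPoch a Q n‖ := by
  have hr0 := norm_nonneg a; have hs0 := norm_nonneg Q
  have key : ∀ i : ℕ, (0:ℝ) < 1 - ‖a‖ * ‖Q‖ ^ i := fun i => by
    have := (rfac_mem hr0 ha hs0 hQ i).2; linarith
  have step1 : pochLB ‖a‖ ‖Q‖ ≤ ∏ i ∈ range n, (1 - ‖a‖ * ‖Q‖ ^ i) := by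
    have hprod : ∏ i ∈ range n, (1 - ‖a‖ * ‖Q‖ ^ i)
        = Real.exp (∑ i ∈ range n, Real.log (1 - ‖a‖ * ‖Q‖ ^ i)) := by
      rw [Real.exp_sum]
      exact Finset.prod_congr rfl (fun i _ => (Real.exp_log (key i)).symm)
    rw [hprod, pochLB]
    apply Real.exp_le_exp.mpr
    have hsummable := summable_rlog hr0 ha hs0 hQ
    have := Summable.sum_le_tsum (range n)
      (fun i _ => by
        have : Real.log (1 - ‖a‖ * ‖Q‖ ^ i) ≤ 0 :=
          Real.log_nonpos (by have := key i; linarith)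
            (by have := (rfac_mem hr0 ha hs0 hQ i).1; linarith)
        exact neg_nonneg.mpr this) hsummable.neg
    simp only [tsum_neg, Finset.sum_neg_distrib] at this
    linarith
  refine step1.trans ?_
  rw [qPoch, norm_prod]
  apply Finset.prod_le_prod (fun i _ => (key i).le)
  intro i _
  calc 1 - ‖a‖ * ‖Q‖ ^ i = ‖(1:ℂ)‖ - ‖a * Q ^ i‖ := by
        rw [norm_one, norm_mul, norm_pow]
    _ ≤ ‖1 - a * Q ^ i‖ := norm_sub_norm_le _ _

lemma qPoch_norm_le {a Q : ℂ} (hQ : ‖Q‖ < 1) (n : ℕ) :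
    ‖qPoch a Q n‖ ≤ Real.exp (‖a‖ * (1 - ‖Q‖)⁻¹) := by
  rw [qPoch, norm_prod]
  have h1 : ∀ i ∈ range n, ‖1 - a * Q ^ i‖ ≤ Real.exp (‖a‖ * ‖Q‖ ^ i) := by
    intro i _
    calc ‖1 - a * Q ^ i‖ ≤ ‖(1:ℂ)‖ + ‖a * Q ^ i‖ := norm_sub_le _ _
      _ = ‖a‖ * ‖Q‖ ^ i + 1 := by rw [norm_one, norm_mul, norm_pow]; ring
      _ ≤ Real.exp (‖a‖ * ‖Q‖ ^ i) := Real.add_one_le_exp _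
  calc ∏ i ∈ range n, ‖1 - a * Q ^ i‖ ≤ ∏ i ∈ range n, Real.exp (‖a‖ * ‖Q‖ ^ i) :=
        Finset.prod_le_prod (fun i _ => norm_nonneg _) h1
    _ = Real.exp (∑ i ∈ range n, ‖a‖ * ‖Q‖ ^ i) := (Real.exp_sum _ _).symm
    _ ≤ Real.exp (‖a‖ * (1 - ‖Q‖)⁻¹) := by
        apply Real.exp_le_exp.mpr
        have hsum := Summable.sum_le_tsum (range n) (fun i _ => pow_nonneg (norm_nonneg Q) i)
            (summable_geometric_of_lt_one (norm_nonneg Q) hQ)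
        rw [tsum_geometric_of_lt_one (norm_nonneg Q) hQ] at hsum
        rw [← Finset.mul_sum]
        exact mul_le_mul_of_nonneg_left hsum (norm_nonneg a)

lemma qPoch_ne_zero {a Q : ℂ} (ha : ‖a‖ < 1) (hQ : ‖Q‖ < 1) (n : ℕ) :
    qPoch a Q n ≠ 0 := by
  intro h
  have := pochLB_le_qPoch ha hQ n
  rw [h, norm_zero] at this
  exact absurd this (not_le.mpr (pochLB_pos _ _))

/-! ### Euler's q-exponential identity -/

noncomputable def eulerF (Q z : ℂ) : ℂ := ∑' k : ℕ, z ^ k / qPoch Q Q k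

lemma summable_eulerF {Q z : ℂ} (hQ : ‖Q‖ < 1) (hz : ‖z‖ < 1) :
    Summable (fun k : ℕ => z ^ k / qPoch Q Q k) := by
  apply Summable.of_norm_bounded (g := fun k => (pochLB ‖Q‖ ‖Q‖)⁻¹ * ‖z‖ ^ k)
  · exact (summable_geometric_of_lt_one (norm_nonneg z) hz).mul_left _
  · intro k
    rw [norm_div, norm_pow]
    calc ‖z‖ ^ k / ‖qPoch Q Q k‖ ≤ ‖z‖ ^ k / pochLB ‖Q‖ ‖Q‖ :=
          div_le_div_of_nonneg_left (pow_nonneg (norm_nonneg z) k) (pochLB_pos _ _)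
            (pochLB_le_qPoch hQ hQ k)
      _ = (pochLB ‖Q‖ ‖Q‖)⁻¹ * ‖z‖ ^ k := by rw [div_eq_inv_mul]

lemma qPoch_succ (a Q : ℂ) (n : ℕ) : qPoch a Q (n + 1) = qPoch a Q n * (1 - a * Q ^ n) := by
  rw [qPoch, qPoch, Finset.prod_range_succ]

set_option maxHeartbeats 1000000 in
lemma eulerF_funeq {Q z : ℂ} (hQ : ‖Q‖ < 1) (hz : ‖z‖ < 1) :
    (1 - z) * eulerF Q z = eulerF Q (Q * z) := by
  have hs : Summable (fun k : ℕ => z ^ k / qPoch Q Q k) := summable_eulerF hQ hz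
  have hs1 : Summable (fun k : ℕ => z ^ (k + 1) / qPoch Q Q (k + 1)) :=
    (summable_nat_add_iff (f := fun k : ℕ => z ^ k / qPoch Q Q k) 1).mpr hs
  have hzQ : ‖Q * z‖ < 1 := by
    rw [norm_mul]
    calc ‖Q‖ * ‖z‖ ≤ 1 * ‖z‖ := by gcongr
      _ < 1 := by simpa using hz
  have hsQ : Summable (fun k : ℕ => (Q * z) ^ k / qPoch Q Q k) := summable_eulerF hQ hzQ
  have hsQ1 : Summable (fun k : ℕ => (Q * z) ^ (k + 1) / qPoch Q Q (k + 1)) :=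
    (summable_nat_add_iff (f := fun k : ℕ => (Q * z) ^ k / qPoch Q Q k) 1).mpr hsQ
  have key : ∀ k : ℕ, z ^ (k + 1) / qPoch Q Q (k + 1) - z * (z ^ k / qPoch Q Q k)
      = (Q * z) ^ (k + 1) / qPoch Q Q (k + 1) := by
    intro k
    have h1 : qPoch Q Q k ≠ 0 := qPoch_ne_zero hQ hQ k
    have h2 : (1 : ℂ) - Q * Q ^ k ≠ 0 := factor_ne_zero hQ hQ k
    have e2 : z * (z ^ k / qPoch Q Q k) = z ^ (k + 1) / qPoch Q Q k := by
      rw [mul_div_assoc', ← pow_succ']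
    rw [qPoch_succ, e2, div_sub_div _ _ (mul_ne_zero h1 h2) h1,
      div_eq_div_iff (mul_ne_zero (mul_ne_zero h1 h2) h1) (mul_ne_zero h1 h2)]
    ring
  have e1 : eulerF Q z = 1 + ∑' k : ℕ, z ^ (k + 1) / qPoch Q Q (k + 1) := by
    rw [eulerF, Summable.tsum_eq_zero_add hs]
    simp [qPoch]
  have e2 : eulerF Q (Q * z) = 1 + ∑' k : ℕ, (Q * z) ^ (k + 1) / qPoch Q Q (k + 1) := by
    rw [eulerF, Summable.tsum_eq_zero_add hsQ]
    simp [qPoch]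
  have e3 : z * eulerF Q z = ∑' k : ℕ, z * (z ^ k / qPoch Q Q k) := by
    rw [eulerF, tsum_mul_left]
  have e4 : ∑' k : ℕ, z ^ (k + 1) / qPoch Q Q (k + 1) - ∑' k : ℕ, z * (z ^ k / qPoch Q Q k)
      = ∑' k : ℕ, (Q * z) ^ (k + 1) / qPoch Q Q (k + 1) := by
    rw [← Summable.tsum_sub hs1 (hs.mul_left z)]
    exact tsum_congr key
  calc (1 - z) * eulerF Q z = eulerF Q z - z * eulerF Q z := by ring
    _ = 1 + ∑' k : ℕ, (Q * z) ^ (k + 1) / qPoch Q Q (k + 1) := by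
        rw [e3, e1, add_sub_assoc, e4]
    _ = eulerF Q (Q * z) := e2.symm

lemma eulerF_prod {Q z : ℂ} (hQ : ‖Q‖ < 1) (hz : ‖z‖ < 1) (n : ℕ) :
    eulerF Q z * qPoch z Q n = eulerF Q (Q ^ n * z) := by
  induction n with
  | zero => simp [qPoch]
  | succ n ih =>
    have hw : ‖Q ^ n * z‖ < 1 := by
      rw [norm_mul, norm_pow]
      calc ‖Q‖ ^ n * ‖z‖ ≤ 1 * ‖z‖ := by
            gcongr
            exact pow_le_one₀ (norm_nonneg Q) hQ.le
        _ < 1 := by simpa using hz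
    have hfe := eulerF_funeq hQ hw
    rw [qPoch_succ, ← mul_assoc, ih]
    have h1 : eulerF Q (Q ^ n * z) * (1 - z * Q ^ n) = (1 - Q ^ n * z) * eulerF Q (Q ^ n * z) := by
      ring
    rw [h1, hfe]
    congr 1
    ring

lemma eulerF_sub_one_norm {Q w : ℂ} (hQ : ‖Q‖ < 1) (hw : ‖w‖ ≤ 1/2) :
    ‖eulerF Q w - 1‖ ≤ 2 * (pochLB ‖Q‖ ‖Q‖)⁻¹ * ‖w‖ := by
  have hw1 : ‖w‖ < 1 := lt_of_le_of_lt hw (by norm_num)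
  have hs : Summable (fun k : ℕ => w ^ k / qPoch Q Q k) := summable_eulerF hQ hw1
  have hs1 : Summable (fun k : ℕ => w ^ (k + 1) / qPoch Q Q (k + 1)) :=
    (summable_nat_add_iff (f := fun k : ℕ => w ^ k / qPoch Q Q k) 1).mpr hs
  have e1 : eulerF Q w - 1 = ∑' k : ℕ, w ^ (k + 1) / qPoch Q Q (k + 1) := by
    rw [eulerF, Summable.tsum_eq_zero_add hs]
    simp [qPoch]
  rw [e1]
  have hb : ∀ k : ℕ, ‖w ^ (k + 1) / qPoch Q Q (k + 1)‖
      ≤ (pochLB ‖Q‖ ‖Q‖)⁻¹ * ‖w‖ * (1/2) ^ k := by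
    intro k
    rw [norm_div, norm_pow]
    have h1 : ‖w‖ ^ (k + 1) ≤ ‖w‖ * (1/2) ^ k := by
      rw [pow_succ']
      gcongr
    calc ‖w‖ ^ (k + 1) / ‖qPoch Q Q (k + 1)‖ ≤ ‖w‖ ^ (k + 1) / pochLB ‖Q‖ ‖Q‖ :=
          div_le_div_of_nonneg_left (pow_nonneg (norm_nonneg w) _) (pochLB_pos _ _)
            (pochLB_le_qPoch hQ hQ _)
      _ = (pochLB ‖Q‖ ‖Q‖)⁻¹ * ‖w‖ ^ (k + 1) := by rw [div_eq_inv_mul]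
      _ ≤ (pochLB ‖Q‖ ‖Q‖)⁻¹ * (‖w‖ * (1/2) ^ k) := by
          have := inv_nonneg.mpr (pochLB_pos ‖Q‖ ‖Q‖).le
          gcongr
      _ = (pochLB ‖Q‖ ‖Q‖)⁻¹ * ‖w‖ * (1/2) ^ k := by ring
  have hsb : Summable (fun k : ℕ => (pochLB ‖Q‖ ‖Q‖)⁻¹ * ‖w‖ * (1/2 : ℝ) ^ k) :=
    (summable_geometric_of_lt_one (by norm_num) (by norm_num)).mul_left _
  have hsn : Summable (fun k : ℕ => ‖w ^ (k + 1) / qPoch Q Q (k + 1)‖) :=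
    hsb.of_norm_bounded (fun k => by simpa using hb k)
  calc ‖∑' k : ℕ, w ^ (k + 1) / qPoch Q Q (k + 1)‖
      ≤ ∑' k : ℕ, (pochLB ‖Q‖ ‖Q‖)⁻¹ * ‖w‖ * (1/2 : ℝ) ^ k :=
        (norm_tsum_le_tsum_norm hsn).trans (Summable.tsum_le_tsum hb hsn hsb)
    _ = (pochLB ‖Q‖ ‖Q‖)⁻¹ * ‖w‖ * ∑' k : ℕ, (1/2 : ℝ) ^ k := tsum_mul_left
    _ = 2 * (pochLB ‖Q‖ ‖Q‖)⁻¹ * ‖w‖ := by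
        rw [tsum_geometric_of_lt_one (by norm_num) (by norm_num)]
        norm_num
        ring

lemma tendsto_eulerF_one {Q z : ℂ} (hQ : ‖Q‖ < 1) (hz : ‖z‖ < 1) :
    Tendsto (fun n => eulerF Q (Q ^ n * z)) atTop (nhds 1) := by
  have h0 : Tendsto (fun n : ℕ => ‖Q‖ ^ n * ‖z‖) atTop (nhds 0) := by
    simpa using (tendsto_pow_atTop_nhds_zero_of_lt_one (norm_nonneg Q) hQ).mul_const ‖z‖
  have key : Tendsto (fun n => eulerF Q (Q ^ n * z) - 1) atTop (nhds 0) := by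
    rw [tendsto_zero_iff_norm_tendsto_zero]
    apply squeeze_zero' (g := fun n => 2 * (pochLB ‖Q‖ ‖Q‖)⁻¹ * (‖Q‖ ^ n * ‖z‖))
      (Filter.Eventually.of_forall (fun n => norm_nonneg _)) ?_ ?_
    · filter_upwards [h0.eventually_le_const (by norm_num : (0:ℝ) < 1/2)] with n hn
      have hw : ‖Q ^ n * z‖ ≤ 1/2 := by rw [norm_mul, norm_pow]; exact hn
      have := eulerF_sub_one_norm hQ hw
      rwa [norm_mul, norm_pow] at this
    · simpa using h0.const_mul (2 * (pochLB ‖Q‖ ‖Q‖)⁻¹)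
  have h2 := key.add_const 1
  simpa using h2

lemma euler_qexp {Q z : ℂ} (hQ : ‖Q‖ < 1) (hz : ‖z‖ < 1) :
    eulerF Q z = 1 / ∏' i : ℕ, (1 - z * Q ^ i) := by
  have h1 : Tendsto (fun n => eulerF Q z * qPoch z Q n) atTop
      (nhds (eulerF Q z * ∏' i : ℕ, (1 - z * Q ^ i))) :=
    (tendsto_qPoch hz hQ).const_mul _
  have h2 : (fun n => eulerF Q z * qPoch z Q n) = fun n => eulerF Q (Q ^ n * z) :=
    funext (fun n => eulerF_prod hQ hz n)
  rw [h2] at h1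
  have h3 := tendsto_nhds_unique h1 (tendsto_eulerF_one hQ hz)
  have h4 : (∏' i : ℕ, (1 - z * Q ^ i)) ≠ 0 := tprod_poch_ne_zero hz hQ
  field_simp
  linear_combination h3

theorem limit_T0_sum (q : ℂ) (hq : ‖q‖ < 1) :
    Tendsto
      (fun N => ∑ k ∈ range (N + 1),
        q ^ k * (qPoch (q ^ 3) (q ^ 3) N /
            (qPoch (q ^ 3) (q ^ 3) k * qPoch (q ^ 3) (q ^ 3) (N - k))) *
          qPoch (-q ^ 2) (q ^ 3) (N - k))
      atTop
      (nhds (1 / ((∏' i : ℕ, (1 - q ^ 2 * (q ^ 3) ^ i)) *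
        (∏' i : ℕ, (1 - q * (q ^ 6) ^ i))))) := by
  have h0 : (0:ℝ) ≤ ‖q‖ := norm_nonneg q
  have hpow : ∀ m : ℕ, m ≠ 0 → ‖q ^ m‖ < 1 := fun m hm => by
    rw [norm_pow]; exact pow_lt_one₀ h0 hq hm
  have hq3 : ‖q ^ 3‖ < 1 := hpow 3 (by norm_num)
  have hq2 : ‖q ^ 2‖ < 1 := hpow 2 (by norm_num)
  have hq2' : ‖-q ^ 2‖ < 1 := by rw [norm_neg]; exact hq2
  have hq6 : ‖q ^ 6‖ < 1 := hpow 6 (by norm_num)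
  have hq4 : ‖q ^ 4‖ < 1 := hpow 4 (by norm_num)
  -- abbreviations
  set P : ℕ → ℂ := fun n => qPoch (q ^ 3) (q ^ 3) n with hPdef
  set A : ℕ → ℂ := fun n => qPoch (-q ^ 2) (q ^ 3) n with hAdef
  set Pinf : ℂ := ∏' i : ℕ, (1 - q ^ 3 * (q ^ 3) ^ i) with hPinfdef
  set Ainf : ℂ := ∏' i : ℕ, (1 - (-q ^ 2) * (q ^ 3) ^ i) with hAinfdef
  have hPinf_ne : Pinf ≠ 0 := tprod_poch_ne_zero hq3 hq3
  have hAinf_ne : Ainf ≠ 0 := tprod_poch_ne_zero hq2' hq3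
  have hPk_ne : ∀ k, P k ≠ 0 := fun k => qPoch_ne_zero hq3 hq3 k
  have htP : Tendsto P atTop (nhds Pinf) := tendsto_qPoch hq3 hq3
  have htA : Tendsto A atTop (nhds Ainf) := tendsto_qPoch hq2' hq3
  set f : ℕ → ℕ → ℂ :=
    fun N k => if k ≤ N then q ^ k * (P N / (P k * P (N - k))) * A (N - k) else 0 with hfdef
  set g : ℕ → ℂ := fun k => q ^ k * (Pinf / (P k * Pinf)) * Ainf with hgdef
  -- constants for domination
  set c : ℝ := pochLB ‖q ^ 3‖ ‖q ^ 3‖ with hcdef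
  have hc : 0 < c := pochLB_pos _ _
  set Cp : ℝ := Real.exp (‖q ^ 3‖ * (1 - ‖q ^ 3‖)⁻¹) with hCpdef
  set Ca : ℝ := Real.exp (‖-q ^ 2‖ * (1 - ‖q ^ 3‖)⁻¹) with hCadef
  have hCp : ∀ n, ‖P n‖ ≤ Cp := fun n => qPoch_norm_le hq3 n
  have hCa : ∀ n, ‖A n‖ ≤ Ca := fun n => qPoch_norm_le hq3 n
  have hcle : ∀ n, c ≤ ‖P n‖ := fun n => pochLB_le_qPoch hq3 hq3 n
  have hCp0 : (0:ℝ) < Cp := Real.exp_pos _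
  have hCa0 : (0:ℝ) < Ca := Real.exp_pos _
  -- step A : the finite sums are tsums of f
  have hfun : (fun N => ∑ k ∈ range (N + 1),
      q ^ k * (P N / (P k * P (N - k))) * A (N - k)) = fun N => ∑' k, f N k := by
    funext N
    rw [tsum_eq_sum (s := range (N + 1))
      (fun k hk => if_neg (fun h => hk (mem_range.mpr (Nat.lt_succ_of_le h))))]
    exact Finset.sum_congr rfl
      (fun k hk => (if_pos (Nat.lt_succ_iff.mp (mem_range.mp hk))).symm)
  -- step B : pointwise limits
  have hlim : ∀ k, Tendsto (fun N => f N k) atTop (nhds (g k)) := by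
    intro k
    have hsub : Tendsto (fun N : ℕ => N - k) atTop atTop := tendsto_sub_atTop_nat k
    have tden : Tendsto (fun N => P k * P (N - k)) atTop (nhds (P k * Pinf)) :=
      (htP.comp hsub).const_mul (P k)
    have t1 : Tendsto (fun N => P N / (P k * P (N - k))) atTop
        (nhds (Pinf / (P k * Pinf))) :=
      htP.div tden (mul_ne_zero (hPk_ne k) hPinf_ne)
    have t2 : Tendsto (fun N => q ^ k * (P N / (P k * P (N - k))) * A (N - k)) atTop
        (nhds (g k)) := (t1.const_mul (q ^ k)).mul (htA.comp hsub)
    apply t2.congr'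
    filter_upwards [eventually_ge_atTop k] with N hN
    exact (if_pos hN).symm
  -- step C : domination
  have hbound : ∀ N k, ‖f N k‖ ≤ Cp * Ca / (c * c) * ‖q‖ ^ k := by
    intro N k
    by_cases hk : k ≤ N
    · rw [hfdef]
      simp only [if_pos hk]
      rw [norm_mul, norm_mul, norm_div, norm_mul, norm_pow]
      calc ‖q‖ ^ k * (‖P N‖ / (‖P k‖ * ‖P (N - k)‖)) * ‖A (N - k)‖
          ≤ ‖q‖ ^ k * (Cp / (c * c)) * Ca := by
            apply mul_le_mul ?_ (hCa _) (norm_nonneg _)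
              (by positivity)
            apply mul_le_mul_of_nonneg_left ?_ (pow_nonneg h0 k)
            apply div_le_div₀ hCp0.le (hCp _) (by positivity)
            exact mul_le_mul (hcle _) (hcle _) hc.le (norm_nonneg _)
        _ = Cp * Ca / (c * c) * ‖q‖ ^ k := by ring
    · rw [hfdef]
      simp only [if_neg hk, norm_zero]
      positivity
  have hbsum : Summable (fun k => Cp * Ca / (c * c) * ‖q‖ ^ k) :=
    (summable_geometric_of_lt_one h0 hq).mul_left _
  have main : Tendsto (fun N => ∑' k, f N k) atTop (nhds (∑' k, g k)) :=
    tendsto_tsum_of_dominated_convergence hbsum hlim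
      (Filter.Eventually.of_forall (fun N k => hbound N k))
  -- step E : identify the limit value
  have hgk : ∀ k, g k = q ^ k / P k * Ainf := by
    intro k
    rw [hgdef]
    have h1 : Pinf / (P k * Pinf) = 1 / P k := by
      rw [mul_comm, ← div_div, div_self hPinf_ne]
    simp only [h1]
    ring
  have hval : ∑' k, g k = 1 / ((∏' i : ℕ, (1 - q ^ 2 * (q ^ 3) ^ i)) *
      (∏' i : ℕ, (1 - q * (q ^ 6) ^ i))) := by
    have e1 : ∑' k, g k = (∑' k : ℕ, q ^ k / P k) * Ainf := by
      rw [tsum_congr hgk, tsum_mul_right]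
    rw [e1]
    have e2 : (∑' k : ℕ, q ^ k / P k) = eulerF (q ^ 3) q := rfl
    rw [e2, euler_qexp hq3 hq]
    -- now pure product identities
    set B : ℂ := ∏' i : ℕ, (1 - q ^ 2 * (q ^ 3) ^ i) with hBdef
    set C : ℂ := ∏' i : ℕ, (1 - q * (q ^ 6) ^ i) with hCdef
    set D : ℂ := ∏' i : ℕ, (1 - q ^ 4 * (q ^ 6) ^ i) with hDdef
    set Z : ℂ := ∏' i : ℕ, (1 - q * (q ^ 3) ^ i) with hZdef
    have multA : Multipliable (fun i : ℕ => 1 - (-q ^ 2) * (q ^ 3) ^ i) :=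
      (hasProd_poch hq2' hq3).multipliable
    have multB : Multipliable (fun i : ℕ => 1 - q ^ 2 * (q ^ 3) ^ i) :=
      (hasProd_poch hq2 hq3).multipliable
    have hbase : (q ^ 3 : ℂ) * q ^ 3 = q ^ 6 := by ring
    have hpow6 : ∀ i : ℕ, ((q ^ 6 : ℂ)) ^ i = (q ^ 3) ^ i * (q ^ 3) ^ i := by
      intro i; rw [← hbase, mul_pow]
    have hAB : Ainf * B = D := by
      rw [hAinfdef, hBdef, hDdef, ← Multipliable.tprod_mul multA multB]
      apply tprod_congr
      intro i
      rw [hpow6 i]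
      ring
    have hCmul : Multipliable (fun i : ℕ => 1 - q * (q ^ 6) ^ i) :=
      (hasProd_poch hq hq6).multipliable
    have hDmul : Multipliable (fun i : ℕ => 1 - q ^ 4 * (q ^ 6) ^ i) :=
      (hasProd_poch hq4 hq6).multipliable
    have heven : (fun k : ℕ => 1 - q * (q ^ 3) ^ (2 * k)) =
        fun k : ℕ => 1 - q * (q ^ 6) ^ k := by
      funext k
      have h2 : ((q ^ 3 : ℂ)) ^ 2 = q ^ 6 := by ring
      rw [pow_mul, h2]
    have hodd : (fun k : ℕ => 1 - q * (q ^ 3) ^ (2 * k + 1)) =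
        fun k : ℕ => 1 - q ^ 4 * (q ^ 6) ^ k := by
      funext k
      have h2 : ((q ^ 3 : ℂ)) ^ 2 = q ^ 6 := by ring
      rw [pow_succ, pow_mul, h2]
      ring
    have hZ : C * D = Z := by
      have h := tprod_even_mul_odd (f := fun i : ℕ => 1 - q * (q ^ 3) ^ i)
        (by rw [heven]; exact hCmul) (by rw [hodd]; exact hDmul)
      rw [heven, hodd] at h
      exact h
    have hB_ne : B ≠ 0 := tprod_poch_ne_zero hq2 hq3
    have hC_ne : C ≠ 0 := tprod_poch_ne_zero hq hq6
    rw [← hZ, ← hAB]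
    field_simp
  rw [← hfun, hval] at main
  exact main
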